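/- arXiv:1607.07705 — 2 statements merged into one kernel-verified Lean document; each statement's English description precedes it below -/
import Mathlib

section
/- Let C : ℝ^n → ℝ be C², nonnegative, with C(θ*) = 0, and suppose the Hessian H = ∇²C(θ*) is positive definite. Then the multiscale sloppiness S(δ) = max{C(θ) : ‖θ−θ*‖ ≤ δ} / min{C(θ) : ‖θ−θ*‖ = δ} tends, as δ → 0⁺, to the condition number of H, i.e. to λ_max(H)/λ_min(H). -/
open Set

open Finset in
lemma quad_eq {n : ℕ} (H : Matrix (Fin n) (Fin n) ℝ) (hH : H.IsHermitian)
    (v : EuclideanSpace ℝ (Fin n)) :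
    ∑ i, ∑ j, v i * H i j * v j
      = ∑ j, hH.eigenvalues j * (hH.eigenvectorBasis.repr v j)^2 := by
  classical
  set b := hH.eigenvectorBasis with hb
  set c : Fin n → ℝ := fun j => b.repr v j with hc
  have hsum : ∑ j, c j • b j = v := b.sum_repr v
  set w : EuclideanSpace ℝ (Fin n) :=
    (WithLp.equiv 2 (Fin n → ℝ)).symm (Matrix.mulVec H v) with hw
  -- LHS = ⟪v, H *ᵥ v⟫
  have key : ∑ i, ∑ j, v i * H i j * v j = inner ℝ v w := by
    rw [PiLp.inner_apply]
    refine Finset.sum_congr rfl fun i _ => ?_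
    simp [hw, Matrix.mulVec, dotProduct, Finset.mul_sum, mul_assoc, RCLike.inner_apply]
    rw [Finset.sum_mul]; exact Finset.sum_congr rfl fun _ _ => by ring
  have hsymm : H.transpose = H := hH
  have hbw : ∀ j, (inner ℝ (b j) w : ℝ) = hH.eigenvalues j * c j := by
    intro j
    have h1 : (inner ℝ (b j) w : ℝ) = dotProduct (b j) (Matrix.mulVec H v) := by
      rw [PiLp.inner_apply]
      refine Finset.sum_congr rfl fun i _ => ?_
      simp [hw, dotProduct, RCLike.inner_apply]; ring
    have hvm : Matrix.vecMul (b j) H = Matrix.mulVec H (b j) := by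
      conv_lhs => rw [← hsymm]
      rw [Matrix.vecMul_transpose]
    have hmb : H.mulVec (b j) = hH.eigenvalues j • (b j : Fin n → ℝ) :=
      hH.mulVec_eigenvectorBasis j
    rw [h1, Matrix.dotProduct_mulVec, hvm, hmb]
    have h2 : dotProduct (hH.eigenvalues j • (b j : Fin n → ℝ)) v
        = hH.eigenvalues j * inner ℝ (b j) v := by
      simp [smul_dotProduct, dotProduct, PiLp.inner_apply,
        RCLike.inner_apply, Finset.mul_sum, mul_assoc]
      exact Finset.sum_congr rfl fun _ _ => by ring
    rw [h2, ← OrthonormalBasis.repr_apply_apply]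
  calc ∑ i, ∑ j, v i * H i j * v j = inner ℝ v w := key
    _ = ∑ j, c j * (inner ℝ (b j) w : ℝ) := by
        conv_lhs => rw [← hsum]
        rw [sum_inner]
        refine Finset.sum_congr rfl fun j _ => ?_
        rw [real_inner_smul_left]
    _ = ∑ j, hH.eigenvalues j * (c j)^2 := by
        refine Finset.sum_congr rfl fun j _ => ?_
        rw [hbw j]; ring

lemma fin_max {n : ℕ} (hn : 0 < n) (f : Fin n → ℝ) :
    ∃ i0, (⨆ i, f i) = f i0 ∧ ∀ i, f i ≤ f i0 := by
  haveI : Nonempty (Fin n) := ⟨⟨0, hn⟩⟩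
  obtain ⟨i0, hi0⟩ := Finite.exists_max f
  exact ⟨i0, le_antisymm (ciSup_le hi0)
    (le_ciSup (Set.Finite.bddAbove (Set.finite_range f)) i0), hi0⟩

lemma fin_min {n : ℕ} (hn : 0 < n) (f : Fin n → ℝ) :
    ∃ i0, (⨅ i, f i) = f i0 ∧ ∀ i, f i0 ≤ f i := by
  haveI : Nonempty (Fin n) := ⟨⟨0, hn⟩⟩
  obtain ⟨i0, hi0⟩ := Finite.exists_min f
  exact ⟨i0, le_antisymm (ciInf_le (Set.Finite.bddBelow (Set.finite_range f)) i0)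
    (le_ciInf hi0), hi0⟩

lemma sum_sq_repr {n : ℕ} (b : OrthonormalBasis (Fin n) ℝ (EuclideanSpace ℝ (Fin n)))
    (v : EuclideanSpace ℝ (Fin n)) : ∑ j, (b.repr v j)^2 = ‖v‖^2 := by
  have h1 : ‖b.repr v‖ = ‖v‖ := b.repr.norm_map v
  rw [← h1, EuclideanSpace.norm_eq, Real.sq_sqrt (by positivity)]
  simp [sq_abs]


lemma taylor_est {n : ℕ} (C : EuclideanSpace ℝ (Fin n) → ℝ)
    (θs : EuclideanSpace ℝ (Fin n)) (hC : ContDiff ℝ 2 C)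
    (hnn : ∀ θ, 0 ≤ C θ) (h0 : C θs = 0) {ε : ℝ} (hε : 0 < ε) :
    ∃ δ0 > 0, ∀ v : EuclideanSpace ℝ (Fin n), ‖v‖ ≤ δ0 →
      |C (θs + v) - iteratedFDeriv ℝ 2 C θs ![v, v] / 2| ≤ ε * ‖v‖ ^ 2 := by
  classical
  have hdiff : Differentiable ℝ C := hC.differentiable (by norm_num)
  have hC1 : ContDiff ℝ 1 (fderiv ℝ C) := hC.fderiv_right (by norm_num)
  have hdiff' : Differentiable ℝ (fderiv ℝ C) := hC1.differentiable (by norm_num)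
  have hf'0 : fderiv ℝ C θs = 0 := by
    have : IsLocalMin C θs := Filter.Eventually.of_forall (fun θ => h0 ▸ hnn θ)
    exact this.fderiv_eq_zero
  -- continuity of the second iterated derivative
  have hcont : Continuous (iteratedFDeriv ℝ 2 C) := hC.continuous_iteratedFDeriv le_rfl
  obtain ⟨δ0, hδ0, hδball⟩ : ∃ δ0 > 0, ∀ x : EuclideanSpace ℝ (Fin n), ‖x - θs‖ ≤ δ0 →
      ‖iteratedFDeriv ℝ 2 C x - iteratedFDeriv ℝ 2 C θs‖ ≤ ε := by
    obtain ⟨δ, hδ, hd⟩ := Metric.continuousAt_iff.1 (hcont.continuousAt (x := θs)) ε hε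
    refine ⟨δ/2, by positivity, fun x hx => ?_⟩
    have : dist x θs < δ := by
      rw [dist_eq_norm]; linarith
    exact le_of_lt (by simpa [dist_eq_norm] using hd this)
  refine ⟨δ0, hδ0, fun v hv => ?_⟩
  set Q : ℝ := iteratedFDeriv ℝ 2 C θs ![v, v] with hQ
  set γ : ℝ → EuclideanSpace ℝ (Fin n) := fun t => θs + t • v with hγ
  have hγd : ∀ t : ℝ, HasDerivAt γ v t := by
    intro t
    have : HasDerivAt (fun t : ℝ => t • v) ((1:ℝ) • v) t := (hasDerivAt_id t).smul_const v
    simpa [hγ] using this.const_add θs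
  have hg1 : ∀ t : ℝ, HasDerivAt (fun t => C (γ t)) (fderiv ℝ C (γ t) v) t := by
    intro t
    exact ((hdiff (γ t)).hasFDerivAt).comp_hasDerivAt t (hγd t)
  have hg2 : ∀ t : ℝ, HasDerivAt (fun t => fderiv ℝ C (γ t) v)
      (iteratedFDeriv ℝ 2 C (γ t) ![v, v]) t := by
    intro t
    have h1 : HasDerivAt (fun t => fderiv ℝ C (γ t))
        (fderiv ℝ (fderiv ℝ C) (γ t) v) t :=
      ((hdiff' (γ t)).hasFDerivAt).comp_hasDerivAt t (hγd t)
    have h2 := h1.clm_apply (hasDerivAt_const t v)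
    simp only [map_zero, add_zero] at h2
    have h3 : iteratedFDeriv ℝ 2 C (γ t) ![v, v]
        = fderiv ℝ (fderiv ℝ C) (γ t) v v := by
      rw [iteratedFDeriv_two_apply]; rfl
    rw [h3]
    simpa using h2
  -- bound on the difference of second derivatives applied to (v,v)
  have hQbound : ∀ t ∈ Icc (0:ℝ) 1,
      |iteratedFDeriv ℝ 2 C (γ t) ![v, v] - Q| ≤ ε * ‖v‖ ^ 2 := by
    intro t ht
    have hmem : ‖γ t - θs‖ ≤ δ0 := by
      have : γ t - θs = t • v := by simp [hγ]
      rw [this, norm_smul]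
      calc ‖t‖ * ‖v‖ ≤ 1 * δ0 := by
            apply mul_le_mul _ hv (norm_nonneg v) zero_le_one
            rw [Real.norm_eq_abs, abs_le]; exact ⟨by linarith [ht.1], ht.2⟩
        _ = δ0 := one_mul _
    have := hδball (γ t) hmem
    have hle : |iteratedFDeriv ℝ 2 C (γ t) ![v, v] - Q|
        ≤ ‖iteratedFDeriv ℝ 2 C (γ t) - iteratedFDeriv ℝ 2 C θs‖ * (‖v‖ * (‖v‖ * 1)) := by
      have h4 : iteratedFDeriv ℝ 2 C (γ t) ![v, v] - Q
          = (iteratedFDeriv ℝ 2 C (γ t) - iteratedFDeriv ℝ 2 C θs) ![v, v] := by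
        simp [hQ]
      rw [h4, ← Real.norm_eq_abs]
      have := (iteratedFDeriv ℝ 2 C (γ t) - iteratedFDeriv ℝ 2 C θs).le_opNorm ![v, v]
      simpa [Fin.prod_univ_two] using this
    calc |iteratedFDeriv ℝ 2 C (γ t) ![v, v] - Q|
        ≤ ‖iteratedFDeriv ℝ 2 C (γ t) - iteratedFDeriv ℝ 2 C θs‖ * (‖v‖ * (‖v‖ * 1)) := hle
      _ ≤ ε * (‖v‖ * (‖v‖ * 1)) := by
          apply mul_le_mul_of_nonneg_right this; positivity
      _ = ε * ‖v‖ ^ 2 := by ring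
  -- first MVT: ψ t = f'(γ t) v - t * Q
  set ψ : ℝ → ℝ := fun t => fderiv ℝ C (γ t) v - t * Q with hψ
  have hψ0 : ψ 0 = 0 := by simp [hψ, hγ, hf'0]
  have hψd : ∀ t : ℝ, HasDerivAt ψ (iteratedFDeriv ℝ 2 C (γ t) ![v, v] - Q) t := by
    intro t
    exact (hg2 t).sub ((hasDerivAt_id t).mul_const Q |>.congr_deriv (by ring))
  have hψbound : ∀ t ∈ Icc (0:ℝ) 1, |ψ t| ≤ ε * ‖v‖ ^ 2 := by
    have := norm_image_sub_le_of_norm_deriv_le_segment'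
      (f := ψ) (f' := fun t => iteratedFDeriv ℝ 2 C (γ t) ![v, v] - Q)
      (a := 0) (b := 1)
      (fun x _ => (hψd x).hasDerivWithinAt)
      (fun x hx => by
        rw [Real.norm_eq_abs]
        exact hQbound x ⟨hx.1, le_of_lt hx.2⟩)
    intro t ht
    have h5 := this t ht
    rw [hψ0] at h5
    simp only [sub_zero] at h5
    calc |ψ t| = ‖ψ t‖ := (Real.norm_eq_abs _).symm
      _ ≤ ε * ‖v‖ ^ 2 * t := h5
      _ ≤ ε * ‖v‖ ^ 2 * 1 := by
          apply mul_le_mul_of_nonneg_left (by linarith [ht.2]) (by positivity)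
      _ = ε * ‖v‖ ^ 2 := mul_one _
  -- second MVT: φ t = C (γ t) - t^2/2 * Q
  set φ : ℝ → ℝ := fun t => C (γ t) - t ^ 2 / 2 * Q with hφ
  have hφ0 : φ 0 = 0 := by simp [hφ, hγ, h0]
  have hφd : ∀ t : ℝ, HasDerivAt φ (ψ t) t := by
    intro t
    have h6 : HasDerivAt (fun t : ℝ => t ^ 2 / 2 * Q) (t * Q) t := by
      have := ((hasDerivAt_pow 2 t).div_const 2).mul_const Q
      simpa using this.congr_deriv (by ring)
    exact ((hg1 t).sub h6)
  have hmain := norm_image_sub_le_of_norm_deriv_le_segment'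
    (f := φ) (f' := ψ) (a := 0) (b := 1)
    (fun x _ => (hφd x).hasDerivWithinAt)
    (fun x hx => by
      rw [Real.norm_eq_abs]
      exact hψbound x ⟨hx.1, le_of_lt hx.2⟩)
    1 ⟨zero_le_one, le_rfl⟩
  rw [hφ0] at hmain
  simp only [sub_zero, mul_one] at hmain
  have h7 : φ 1 = C (θs + v) - Q / 2 := by simp [hφ, hγ]; ring
  rw [← Real.norm_eq_abs]
  calc ‖C (θs + v) - Q / 2‖ = ‖φ 1‖ := by rw [h7]
    _ ≤ ε * ‖v‖ ^ 2 := by simpa using hmain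

theorem stmt1 {n : ℕ} (hn : 0 < n) (C : EuclideanSpace ℝ (Fin n) → ℝ)
    (θs : EuclideanSpace ℝ (Fin n)) (hC : ContDiff ℝ 2 C)
    (hnn : ∀ θ, 0 ≤ C θ) (h0 : C θs = 0)
    (H : Matrix (Fin n) (Fin n) ℝ) (hH : H.IsHermitian)
    (hHess : ∀ v : EuclideanSpace ℝ (Fin n),
      iteratedFDeriv ℝ 2 C θs ![v, v] = ∑ i, ∑ j, v i * H i j * v j)
    (hpd : H.PosDef) :
    Filter.Tendsto
      (fun δ : ℝ =>
        sSup {x | ∃ θ : EuclideanSpace ℝ (Fin n), ‖θ - θs‖ ≤ δ ∧ x = C θ} /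
          sInf {x | ∃ θ : EuclideanSpace ℝ (Fin n), ‖θ - θs‖ = δ ∧ x = C θ})
      (nhdsWithin 0 (Set.Ioi 0))
      (nhds ((⨆ i, hH.eigenvalues i) / (⨅ i, hH.eigenvalues i))) := by
  classical
  obtain ⟨i1, hsup, hmax⟩ := fin_max hn hH.eigenvalues
  obtain ⟨i0, hinf, hmin⟩ := fin_min hn hH.eigenvalues
  have hpos : ∀ i, 0 < hH.eigenvalues i := fun i => hpd.eigenvalues_pos i
  set b := hH.eigenvectorBasis with hb
  set lam1 := hH.eigenvalues i1 with hlam1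
  set lam0 := hH.eigenvalues i0 with hlam0
  have hlam1pos : 0 < lam1 := hpos i1
  have hlam0pos : 0 < lam0 := hpos i0
  -- quadratic form bounds
  have hQub : ∀ v : EuclideanSpace ℝ (Fin n),
      iteratedFDeriv ℝ 2 C θs ![v, v] ≤ lam1 * ‖v‖ ^ 2 := by
    intro v
    rw [hHess v, quad_eq H hH v, ← sum_sq_repr b v, Finset.mul_sum]
    exact Finset.sum_le_sum fun j _ =>
      mul_le_mul_of_nonneg_right (hmax j) (sq_nonneg _)
  have hQlb : ∀ v : EuclideanSpace ℝ (Fin n),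
      lam0 * ‖v‖ ^ 2 ≤ iteratedFDeriv ℝ 2 C θs ![v, v] := by
    intro v
    rw [hHess v, quad_eq H hH v, ← sum_sq_repr b v, Finset.mul_sum]
    exact Finset.sum_le_sum fun j _ =>
      mul_le_mul_of_nonneg_right (hmin j) (sq_nonneg _)
  have hQeig : ∀ (i : Fin n) (t : ℝ),
      iteratedFDeriv ℝ 2 C θs ![t • b i, t • b i] = hH.eigenvalues i * t ^ 2 := by
    intro i t
    rw [hHess, quad_eq H hH]
    have hr : ∀ j, b.repr (t • b i) j = if j = i then t else 0 := by
      intro j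
      rw [map_smul, b.repr_self]
      by_cases h : j = i <;> simp [h, EuclideanSpace.single_apply]
    rw [Finset.sum_eq_single i (fun j _ hj => by simp only [← hb, hr]; simp [hj])
      (fun h => absurd (Finset.mem_univ i) h)]
    simp only [← hb, hr]; simp
  have hnormb : ∀ (i : Fin n) (t : ℝ), ‖t • b i‖ = |t| := by
    intro i t
    rw [norm_smul, b.orthonormal.1 i, Real.norm_eq_abs, mul_one]
  -- the two claims
  set a : ℝ → ℝ := fun δ =>
    sSup {x | ∃ θ : EuclideanSpace ℝ (Fin n), ‖θ - θs‖ ≤ δ ∧ x = C θ} with ha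
  set bb : ℝ → ℝ := fun δ =>
    sInf {x | ∃ θ : EuclideanSpace ℝ (Fin n), ‖θ - θs‖ = δ ∧ x = C θ} with hbb
  have claim1 : Filter.Tendsto (fun δ => a δ / δ ^ 2)
      (nhdsWithin 0 (Set.Ioi 0)) (nhds (lam1 / 2)) := by
    rw [Metric.tendsto_nhds]
    intro ε hε
    obtain ⟨δ0, hδ0, hT⟩ := taylor_est C θs hC hnn h0 (show (0:ℝ) < ε/4 by linarith)
    filter_upwards [Ioo_mem_nhdsGT_of_mem (Set.mem_Ico.2 ⟨le_rfl, hδ0⟩)] with δ hδ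
    obtain ⟨hδpos, hδlt⟩ := hδ
    set S := {x | ∃ θ : EuclideanSpace ℝ (Fin n), ‖θ - θs‖ ≤ δ ∧ x = C θ} with hS
    have himg : S = C '' Metric.closedBall θs δ := by
      ext x
      constructor
      · rintro ⟨θ, hθ, rfl⟩
        exact ⟨θ, by rwa [Metric.mem_closedBall, dist_eq_norm], rfl⟩
      · rintro ⟨θ, hθ, rfl⟩
        exact ⟨θ, by rwa [Metric.mem_closedBall, dist_eq_norm] at hθ, rfl⟩
    have hbdd : BddAbove S := by
      rw [himg]
      exact ((isCompact_closedBall θs δ).image hC.continuous).bddAbove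
    have hub : ∀ x ∈ S, x ≤ (lam1 / 2 + ε / 4) * δ ^ 2 := by
      rintro x ⟨θ, hθ, rfl⟩
      have hv2 : ‖θ - θs‖ ^ 2 ≤ δ ^ 2 :=
        pow_le_pow_left₀ (norm_nonneg _) hθ 2
      have hTθ := hT (θ - θs) (le_trans hθ hδlt.le)
      rw [add_sub_cancel] at hTθ
      have hq := hQub (θ - θs)
      rw [abs_le] at hTθ
      nlinarith [hTθ.2, hlam1pos, hε, norm_nonneg (θ - θs)]
    have hsle : a δ ≤ (lam1 / 2 + ε / 4) * δ ^ 2 :=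
      csSup_le ⟨C θs, θs, by simp [hδpos.le], rfl⟩ hub
    -- lower bound via eigenvector
    have hwn : ‖(θs + δ • b i1) - θs‖ = δ := by
      rw [add_sub_cancel_left, hnormb, abs_of_pos hδpos]
    have hwmem : C (θs + δ • b i1) ∈ S := ⟨θs + δ • b i1, hwn.le, rfl⟩
    have hTw := hT (δ • b i1) (by rw [hnormb, abs_of_pos hδpos]; exact hδlt.le)
    rw [hQeig i1 δ, hnormb, abs_of_pos hδpos] at hTw
    rw [abs_le] at hTw
    have hsge : (lam1 / 2 - ε / 4) * δ ^ 2 ≤ a δ := by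
      refine le_trans ?_ (le_csSup hbdd hwmem)
      nlinarith [hTw.1]
    rw [Real.dist_eq, abs_lt]
    have hδ2 : (0:ℝ) < δ ^ 2 := by positivity
    constructor
    · have h1 : (lam1 / 2 - ε / 4) ≤ a δ / δ ^ 2 := by
        rw [le_div_iff₀ hδ2]; linarith [hsge]
      linarith
    · have h2 : a δ / δ ^ 2 ≤ lam1 / 2 + ε / 4 := by
        rw [div_le_iff₀ hδ2]; linarith [hsle]
      linarith
  have claim2 : Filter.Tendsto (fun δ => bb δ / δ ^ 2)
      (nhdsWithin 0 (Set.Ioi 0)) (nhds (lam0 / 2)) := by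
    rw [Metric.tendsto_nhds]
    intro ε hε
    obtain ⟨δ0, hδ0, hT⟩ := taylor_est C θs hC hnn h0 (show (0:ℝ) < ε/4 by linarith)
    filter_upwards [Ioo_mem_nhdsGT_of_mem (Set.mem_Ico.2 ⟨le_rfl, hδ0⟩)] with δ hδ
    obtain ⟨hδpos, hδlt⟩ := hδ
    set S := {x | ∃ θ : EuclideanSpace ℝ (Fin n), ‖θ - θs‖ = δ ∧ x = C θ} with hS
    have hwn : ‖(θs + δ • b i0) - θs‖ = δ := by
      rw [add_sub_cancel_left, hnormb, abs_of_pos hδpos]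
    have hwmem : C (θs + δ • b i0) ∈ S := ⟨θs + δ • b i0, hwn, rfl⟩
    have hbdd : BddBelow S := ⟨0, by rintro x ⟨θ, _, rfl⟩; exact hnn θ⟩
    have hlb : ∀ x ∈ S, (lam0 / 2 - ε / 4) * δ ^ 2 ≤ x := by
      rintro x ⟨θ, hθ, rfl⟩
      have hTθ := hT (θ - θs) (by rw [hθ]; exact hδlt.le)
      rw [add_sub_cancel] at hTθ
      have hq := hQlb (θ - θs)
      rw [hθ] at hq hTθ
      rw [abs_le] at hTθ
      nlinarith [hTθ.1]
    have hsge : (lam0 / 2 - ε / 4) * δ ^ 2 ≤ bb δ := le_csInf ⟨_, hwmem⟩ hlb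
    have hTw := hT (δ • b i0) (by rw [hnormb, abs_of_pos hδpos]; exact hδlt.le)
    rw [hQeig i0 δ, hnormb, abs_of_pos hδpos] at hTw
    rw [abs_le] at hTw
    have hsle : bb δ ≤ (lam0 / 2 + ε / 4) * δ ^ 2 := by
      refine le_trans (csInf_le hbdd hwmem) ?_
      nlinarith [hTw.2]
    rw [Real.dist_eq, abs_lt]
    have hδ2 : (0:ℝ) < δ ^ 2 := by positivity
    constructor
    · have h1 : (lam0 / 2 - ε / 4) ≤ bb δ / δ ^ 2 := by
        rw [le_div_iff₀ hδ2]; linarith [hsge]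
      linarith
    · have h2 : bb δ / δ ^ 2 ≤ lam0 / 2 + ε / 4 := by
        rw [div_le_iff₀ hδ2]; linarith [hsle]
      linarith
  have hne : lam0 / 2 ≠ 0 := by positivity
  have hdiv := claim1.div claim2 hne
  have hval : lam1 / 2 / (lam0 / 2) = lam1 / lam0 := by
    field_simp
  rw [hval] at hdiv
  rw [hsup, hinf]
  refine hdiv.congr' ?_
  refine Filter.eventuallyEq_of_mem self_mem_nhdsWithin fun δ hδ => ?_
  have hδpos : (0:ℝ) < δ := hδ
  have hδ2 : (δ:ℝ) ^ 2 ≠ 0 := by positivity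
  show (a δ / δ ^ 2) / (bb δ / δ ^ 2) = a δ / bb δ
  rcases eq_or_ne (bb δ) 0 with h | h
  · simp [h]
  · field_simp
end

section
/- Consider y(θ) = (e^{−θ₁/3} + e^{−θ₂/3}, e^{−θ₁} + e^{−θ₂}, e^{−3θ₁} + e^{−3θ₂}). If y(θ) = y(φ) for θ, φ ∈ ℝ², then {θ₁, θ₂} = {φ₁, φ₂} as multisets; i.e., either (θ₁, θ₂) = (φ₁, φ₂) or (θ₁, θ₂) = (φ₂, φ₁). -/
noncomputable def yExp (θ₁ θ₂ : ℝ) : Fin 3 → ℝ :=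
  ![Real.exp (-θ₁ / 3) + Real.exp (-θ₂ / 3),
    Real.exp (-θ₁) + Real.exp (-θ₂),
    Real.exp (-3 * θ₁) + Real.exp (-3 * θ₂)]

theorem stmt13 (θ₁ θ₂ φ₁ φ₂ : ℝ) (h : yExp θ₁ θ₂ = yExp φ₁ φ₂) :
    (θ₁ = φ₁ ∧ θ₂ = φ₂) ∨ (θ₁ = φ₂ ∧ θ₂ = φ₁) := by
  set a := Real.exp (-θ₁ / 3) with ha
  set b := Real.exp (-θ₂ / 3) with hb
  set c := Real.exp (-φ₁ / 3) with hc
  set d := Real.exp (-φ₂ / 3) with hd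
  have h0 : a + b = c + d := congrFun h 0
  have h1' : Real.exp (-θ₁) + Real.exp (-θ₂) = Real.exp (-φ₁) + Real.exp (-φ₂) :=
    congrFun h 1
  have ea : Real.exp (-θ₁) = a ^ 3 := by
    rw [ha, ← Real.exp_nat_mul]; norm_num; ring_nf
  have eb : Real.exp (-θ₂) = b ^ 3 := by
    rw [hb, ← Real.exp_nat_mul]; norm_num; ring_nf
  have ec : Real.exp (-φ₁) = c ^ 3 := by
    rw [hc, ← Real.exp_nat_mul]; norm_num; ring_nf
  have ed : Real.exp (-φ₂) = d ^ 3 := by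
    rw [hd, ← Real.exp_nat_mul]; norm_num; ring_nf
  have h1 : a ^ 3 + b ^ 3 = c ^ 3 + d ^ 3 := by rw [← ea, ← eb, ← ec, ← ed]; exact h1'
  have hapos : 0 < a := Real.exp_pos _
  have hbpos : 0 < b := Real.exp_pos _
  have hs : 0 < a + b := by linarith
  have hp : a * b = c * d := by
    have key : 3 * (a * b) * (a + b) = 3 * (c * d) * (c + d) := by
      have e : (a + b) ^ 3 - (a ^ 3 + b ^ 3) = (c + d) ^ 3 - (c ^ 3 + d ^ 3) := by
        rw [h0, h1]
      linear_combination e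
    rw [← h0] at key
    have := mul_right_cancel₀ (ne_of_gt hs) key
    linarith
  have hq : (a - c) * (a - d) = 0 := by nlinarith [h0, hp]
  have inj : ∀ x y : ℝ, Real.exp (-x / 3) = Real.exp (-y / 3) → x = y := by
    intro x y hxy
    have := Real.exp_injective hxy
    linarith
  rcases mul_eq_zero.1 hq with hcase | hcase
  · left
    have hac : a = c := by linarith
    have hbd : b = d := by linarith
    exact ⟨inj _ _ (by rw [← ha, ← hc, hac]), inj _ _ (by rw [← hb, ← hd, hbd])⟩
  · right
    have had : a = d := by linarith
    have hbc : b = c := by linarith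
    exact ⟨inj _ _ (by rw [← ha, ← hd, had]), inj _ _ (by rw [← hb, ← hc, hbc])⟩
end
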